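/- If C is an ideal (Λ×S×T, w, 0, λ) 3D-OOC of maximal weight w = ΛS, then |C| ≤ T^λ. -/

import Mathlib

/-- Cyclic shift by `t` in the temporal (third) coordinate of a `Λ×S×T` binary array,
viewed as a finite set of pulse positions. -/
def tshift {Λ S T : ℕ} (t : Fin T) (A : Finset (Fin Λ × Fin S × Fin T)) :
    Finset (Fin Λ × Fin S × Fin T) :=
  A.image fun p => (p.1, p.2.1, p.2.2 + t)

/-- A `(Λ×S×T, w, λa, λc)` 3-dimensional optical orthogonal code. -/
def Is3DOOC {Λ S T : ℕ} (w la lc : ℕ) (C : Finset (Finset (Fin Λ × Fin S × Fin T))) : Prop :=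
  (∀ A ∈ C, A.card = w) ∧
  (∀ A ∈ C, ∀ t : Fin T, (t : ℕ) ≠ 0 → (A ∩ tshift t A).card ≤ la) ∧
  (∀ A ∈ C, ∀ B ∈ C, A ≠ B → ∀ t : Fin T, (A ∩ tshift t B).card ≤ lc)

/-- A maximal-weight codeword with zero autocorrelation has exactly one pulse per row. -/
private lemma rowfun_exists {Λ S T' : ℕ} (A : Finset (Fin Λ × Fin S × Fin (T' + 1)))
    (hcard : A.card = Λ * S)
    (hauto : ∀ t : Fin (T' + 1), (t : ℕ) ≠ 0 → (A ∩ tshift t A).card ≤ 0) :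
    ∃ f : Fin Λ × Fin S → Fin (T' + 1), ∀ r u, (r.1, r.2, u) ∈ A ↔ u = f r := by
  classical
  have hinj : Set.InjOn (fun p : Fin Λ × Fin S × Fin (T' + 1) => (p.1, p.2.1)) ↑A := by
    rintro ⟨a, b, u⟩ hp ⟨c, d, v⟩ hq he
    simp only [Prod.mk.injEq] at he
    obtain ⟨rfl, rfl⟩ := he
    by_contra hne
    have huv : u ≠ v := by
      intro h; exact hne (by simp [h])
    have ht : (u - v : Fin (T' + 1)) ≠ 0 := sub_ne_zero.mpr huv
    have ht' : ((u - v : Fin (T' + 1)) : ℕ) ≠ 0 := by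
      intro hv
      exact ht (Fin.ext (by simp [hv]))
    have h0 := hauto (u - v) ht'
    have hmem : (a, b, u) ∈ A ∩ tshift (u - v) A := by
      refine Finset.mem_inter.mpr ⟨hp, ?_⟩
      refine Finset.mem_image.mpr ⟨(a, b, v), hq, ?_⟩
      have : v + (u - v) = u := by abel
      simp [this]
    have : 0 < (A ∩ tshift (u - v) A).card := Finset.card_pos.mpr ⟨_, hmem⟩
    omega
  have himg : A.image (fun p : Fin Λ × Fin S × Fin (T' + 1) => (p.1, p.2.1)) = Finset.univ := by
    apply Finset.eq_univ_of_card
    rw [Finset.card_image_of_injOn hinj, hcard]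
    simp [Fintype.card_prod]
  have hsurj : ∀ r : Fin Λ × Fin S, ∃ u, (r.1, r.2, u) ∈ A := by
    rintro ⟨a, b⟩
    have : (a, b) ∈ A.image (fun p : Fin Λ × Fin S × Fin (T' + 1) => (p.1, p.2.1)) := by
      rw [himg]; exact Finset.mem_univ _
    obtain ⟨⟨x, y, u⟩, hp, he⟩ := Finset.mem_image.mp this
    simp only [Prod.mk.injEq] at he
    obtain ⟨rfl, rfl⟩ := he
    exact ⟨u, hp⟩
  refine ⟨fun r => (hsurj r).choose, ?_⟩
  intro r u
  constructor
  · intro hu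
    have h2 := (hsurj r).choose_spec
    have := hinj hu h2 rfl
    simpa using this
  · rintro rfl
    exact (hsurj r).choose_spec

/-- The cross-correlation bound translated to row functions. -/
private lemma cross_count {Λ S T' lam : ℕ} (A B : Finset (Fin Λ × Fin S × Fin (T' + 1)))
    (f g : Fin Λ × Fin S → Fin (T' + 1))
    (hf : ∀ r u, (r.1, r.2, u) ∈ A ↔ u = f r)
    (hg : ∀ r u, (r.1, r.2, u) ∈ B ↔ u = g r)
    (t : Fin (T' + 1)) (hcross : (A ∩ tshift t B).card ≤ lam) :
    (Finset.univ.filter fun r => f r = g r + t).card ≤ lam := by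
  classical
  refine le_trans (Finset.card_le_card_of_injOn (fun r => (r.1, r.2, f r)) ?_ ?_) hcross
  · intro r hr
    simp only [Finset.mem_coe, Finset.mem_filter] at hr ⊢
    refine Finset.mem_inter.mpr ⟨(hf r (f r)).mpr rfl, ?_⟩
    refine Finset.mem_image.mpr ⟨(r.1, r.2, g r), (hg r (g r)).mpr rfl, ?_⟩
    simp [hr.2.symm]
  · rintro ⟨a, b⟩ _ ⟨c, d⟩ _ he
    simp only [Prod.mk.injEq] at he
    exact Prod.ext he.1 he.2.1

/-- An ideal `(Λ×S×T, w, 0, λ)` 3D-OOC of maximal weight `w = ΛS` has at most `T^λ`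
codewords. -/
theorem stmt_8 (Λ S T lam : ℕ) (hLS : 0 < Λ * S)
    (C : Finset (Finset (Fin Λ × Fin S × Fin T))) (h : Is3DOOC (Λ * S) 0 lam C) :
    C.card ≤ T ^ lam := by
  obtain ⟨hw, ha, hc⟩ := h
  cases T with
  | zero =>
    have hC : C = ∅ := by
      ext A
      simp only [Finset.notMem_empty, iff_false]
      intro hA
      have hpos : 0 < A.card := by rw [hw A hA]; exact hLS
      obtain ⟨⟨_, _, u⟩, _⟩ := Finset.card_pos.mp hpos
      exact u.elim0
    simp [hC]
  | succ T' =>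
    classical
    have hex : ∀ A ∈ C, ∃ f : Fin Λ × Fin S → Fin (T' + 1),
        ∀ r u, (r.1, r.2, u) ∈ A ↔ u = f r :=
      fun A hA => rowfun_exists A (hw A hA) (ha A hA)
    set F : Finset (Fin Λ × Fin S × Fin (T' + 1)) → (Fin Λ × Fin S → Fin (T' + 1)) :=
      fun A => if h : ∃ f, ∀ r u, (r.1, r.2, u) ∈ A ↔ u = f r then h.choose else fun _ => 0
      with hFdef
    have hF : ∀ A ∈ C, ∀ r u, (r.1, r.2, u) ∈ A ↔ u = F A r := by
      intro A hA
      have h' := hex A hA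
      rw [hFdef]
      simp only [dif_pos h']
      exact h'.choose_spec
    have hdet : ∀ A ∈ C, A = Finset.univ.image fun r : Fin Λ × Fin S => (r.1, r.2, F A r) := by
      intro A hA
      ext ⟨a, b, u⟩
      simp only [Finset.mem_image, Finset.mem_univ, true_and]
      constructor
      · intro hp
        exact ⟨(a, b), by simp [(hF A hA (a, b) u).mp hp]⟩
      · rintro ⟨r, hr⟩
        exact hr ▸ ((hF A hA r (F A r)).mpr rfl)
    rcases le_or_gt (Λ * S) lam with hle | hlt
    · have h1 : C.card ≤ (T' + 1) ^ (Λ * S) := by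
        have hinjF : Set.InjOn F ↑C := by
          intro A hA B hB hFeq
          rw [hdet A (Finset.mem_coe.mp hA), hdet B (Finset.mem_coe.mp hB), hFeq]
        have := Finset.card_le_card_of_injOn F
          (fun A _ => Finset.mem_univ (F A)) hinjF
        rw [Finset.card_univ, Fintype.card_fun] at this
        simpa [Fintype.card_prod] using this
      exact le_trans h1 (Nat.pow_le_pow_right (Nat.succ_pos T') hle)
    · have hemb : Nonempty (Fin (lam + 1) ↪ Fin Λ × Fin S) := by
        rw [Function.Embedding.nonempty_iff_card_le]
        simpa [Fintype.card_prod] using hlt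
      obtain ⟨ι⟩ := hemb
      have hinjΦ : Set.InjOn
          (fun A => fun i : Fin lam => F A (ι i.succ) - F A (ι 0)) ↑C := by
        intro A hA' B hB' hΦ
        have hA := Finset.mem_coe.mp hA'
        have hB := Finset.mem_coe.mp hB'
        by_contra hne
        have hAB := hc A hA B hB hne
        set f := F A with hf
        set g := F B with hg
        set t : Fin (T' + 1) := f (ι 0) - g (ι 0) with ht
        have key : ∀ i : Fin (lam + 1), f (ι i) = g (ι i) + t := by
          intro i
          rcases Fin.eq_zero_or_eq_succ i with rfl | ⟨j, rfl⟩
          · rw [ht]; abel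
          · have hj := congrFun hΦ j
            simp only [← hf, ← hg] at hj
            have hstep : f (ι j.succ) = (f (ι j.succ) - f (ι 0)) + f (ι 0) := by abel
            rw [hstep, hj, ht]
            abel
        have hsub : (Finset.univ : Finset (Fin (lam + 1))).map ι ⊆
            Finset.univ.filter fun r => f r = g r + t := by
          intro r hr
          obtain ⟨i, _, rfl⟩ := Finset.mem_map.mp hr
          simp [Finset.mem_filter, key i]
        have hcard := Finset.card_le_card hsub
        rw [Finset.card_map, Finset.card_univ, Fintype.card_fin] at hcard
        have hcnt := cross_count A B f g (hF A hA) (hF B hB) t (hAB t)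
        omega
      have hcount := Finset.card_le_card_of_injOn
        (fun A => fun i : Fin lam => F A (ι i.succ) - F A (ι 0))
        (fun A _ => Finset.mem_univ _) hinjΦ
      rw [Finset.card_univ, Fintype.card_fun] at hcount
      simpa using hcount
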